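/- Let p ≥ 5 be a prime and let a and n be positive integers with gcd(a,p) = 1. For any odd integer k with 0 ≤ k ≤ ap^n, one has v_p(s_{p^n}(ap^n, ap^n - k)) ≥ n, where s_{p^n} denotes the p^n-th Stirling numbers of the first kind. -/

import Mathlib

open Polynomial Finset

/-- The `m`-th Stirling number of the first kind `s_m(n,k)`, defined by
`(x+m)(x+m+1)⋯(x+m+n-1) = Σ_{k=0}^{n} s_m(n,k) x^k`. -/
noncomputable def stirlingFirstShift (m n k : ℕ) : ℕ :=
  (∏ i ∈ Finset.range n, (Polynomial.X + Polynomial.C (m + i))).coeff k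

lemma coeff_comp_neg_X {R : Type*} [CommRing R] (f : R[X]) (k : ℕ) :
    (f.comp (-X)).coeff k = (-1 : R) ^ k * f.coeff k := by
  induction f using Polynomial.induction_on' with
  | add p q hp hq => simp [add_comp, hp, hq, mul_add]
  | monomial m b =>
    rw [monomial_comp, neg_pow, show ((-1 : R[X])) = C (-1) by simp, ← C_pow,
      ← mul_assoc, ← C_mul, coeff_C_mul, coeff_X_pow, coeff_monomial]
    rcases eq_or_ne m k with h | h
    · subst h; simp [mul_comm]
    · rw [if_neg fun hh => h hh.symm, if_neg h]; ring

theorem stmt16 (p a n k : ℕ) (hp : p.Prime) (hp5 : 5 ≤ p)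
    (ha : 1 ≤ a) (hn : 1 ≤ n) (hgcd : Nat.gcd a p = 1)
    (hkodd : Odd k) (hk : k ≤ a * p ^ n) :
    padicValNat p (stirlingFirstShift (p ^ n) (a * p ^ n) (a * p ^ n - k)) ≥ n := by
  generalize hq : p ^ n = q at *
  have hq1 : 1 ≤ q := hq ▸ Nat.one_le_pow _ _ hp.pos
  generalize hN : a * q = N at *
  have hN1 : 1 ≤ N := by
    rw [← hN]; exact Nat.one_le_iff_ne_zero.mpr (by positivity)
  have hcF : stirlingFirstShift q N (N - k)
      = (∏ i ∈ Finset.range N, (X + C (q + i)) : ℕ[X]).coeff (N - k) := rfl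
  set c := stirlingFirstShift q N (N - k) with hcdef
  -- positivity of c
  have hcpos : 0 < c := by
    rw [hcF, Finset.prod_X_add_C_coeff (Finset.range N) (fun i => q + i)
      (k := N - k) (by rw [Finset.card_range]; omega)]
    refine Finset.sum_pos (fun t ht => Finset.prod_pos fun i _ => by omega) ?_
    rw [Finset.powersetCard_nonempty, Finset.card_range]
    omega
  -- work in ZMod q
  haveI : NeZero q := ⟨by omega⟩
  set R := ZMod q with hRdef
  have hqR : (q : R) = 0 := ZMod.natCast_self q
  have hNR : (N : R) = 0 := by rw [← hN, Nat.cast_mul, hqR, mul_zero]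
  set g : R[X] := ∏ i ∈ Finset.range N, (X + C (i : R)) with hgdef
  have hgmap : ((∏ i ∈ Finset.range N, (X + C (q + i)) : ℕ[X])).map
      (Nat.castRingHom R) = g := by
    rw [Polynomial.map_prod, hgdef]
    refine Finset.prod_congr rfl fun i _ => ?_
    push_cast [hqR]
    simp
    exact (map_natCast C i).symm
  have hcg : (c : R) = g.coeff (N - k) := by
    rw [hcF, ← hgmap, Polynomial.coeff_map]; rfl
  -- key symmetry
  have key : g.comp (-X) = C ((-1 : R) ^ N) * g := by
    rw [hgdef, Polynomial.prod_comp]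
    have h1 : ∀ i ∈ Finset.range N, (X + C (i : R)).comp (-X)
        = (-1 : R[X]) * (X + C (((N - i : ℕ) : R))) := by
      intro i hi
      rw [Finset.mem_range] at hi
      have hni : ((N - i : ℕ) : R) = -(i : R) := by
        have h2 : ((N - i : ℕ) : R) + (i : R) = 0 := by
          rw [← Nat.cast_add, Nat.sub_add_cancel hi.le, hNR]
        linear_combination h2
      rw [hni]
      simp [add_comp]
      ring
    rw [Finset.prod_congr rfl h1, Finset.prod_mul_distrib, Finset.prod_const]
    have h3 : ∏ i ∈ Finset.range N, (X + C (((N - i : ℕ) : R)))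
        = ∏ i ∈ Finset.range N, (X + C (((i + 1 : ℕ) : R))) := by
      rw [← Finset.prod_range_reflect (fun j => X + C (((j + 1 : ℕ) : R))) N]
      refine Finset.prod_congr rfl fun j hj => ?_
      rw [Finset.mem_range] at hj
      have hje : N - 1 - j + 1 = N - j := by omega
      rw [hje]
    have h4 : ∏ i ∈ Finset.range N, (X + C (((i + 1 : ℕ) : R)))
        = ∏ i ∈ Finset.range N, (X + C ((i : ℕ) : R)) := by
      obtain ⟨M, hM⟩ : ∃ M, N = M + 1 := ⟨N - 1, by omega⟩
      rw [hM, Finset.prod_range_succ, Finset.prod_range_succ',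
        show (((M + 1 : ℕ)) : R) = 0 from hM ▸ hNR]
      simp
    rw [h3, h4]
    simp [← C_pow, mul_comm]
  -- coefficient relation
  have h5 := congrArg (fun P => Polynomial.coeff P (N - k)) key
  simp only [coeff_comp_neg_X, coeff_C_mul] at h5
  have hNk : (-1 : R) ^ N = -(-1 : R) ^ (N - k) := by
    have h6 : (-1 : R) ^ (N - k) * (-1 : R) ^ k = (-1 : R) ^ N := by
      rw [← pow_add]; congr 1; omega
    rw [← h6, hkodd.neg_one_pow, mul_neg_one]
  rw [hNk] at h5
  have hu : (-1 : R) ^ (N - k) * (-1 : R) ^ (N - k) = 1 := by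
    rw [← pow_add]; exact Even.neg_one_pow ⟨N - k, rfl⟩
  have hdd : g.coeff (N - k) = -g.coeff (N - k) := by
    have h7 := congrArg (fun x => (-1 : R) ^ (N - k) * x) h5
    simp only [← mul_assoc, mul_neg, hu, one_mul, neg_mul] at h7
    linear_combination h7 - g.coeff (N - k) * hu
  have hdvd2 : q ∣ 2 * c := by
    rw [← ZMod.natCast_eq_zero_iff]
    push_cast
    rw [hcg]
    linear_combination hdd
  have hcop : Nat.Coprime q 2 := by
    rw [← hq]
    exact Nat.Coprime.pow_left _ ((Nat.coprime_primes hp Nat.prime_two).mpr (by omega))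
  have hdvd : q ∣ c := hcop.dvd_of_dvd_mul_left hdvd2
  rw [← hq] at hdvd
  have hle := (Nat.Prime.pow_dvd_iff_le_factorization hp hcpos.ne').mp hdvd
  rwa [Nat.factorization_def _ hp] at hle
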